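/- Let c > 0 and define F : ℂ² → ℝ² by F(α, β) = (m_1, m_2) with Q = √(|β|²(1 + |α|²)² + c²), m_1 = ((1 − |α|²)/(2(1 + |α|²))) Q and m_2 = (|α|²/(1 + |α|²)) Q. Then the image of F is exactly { (m_1, m_2) ∈ ℝ² : m_2 ≥ 0, m_1 + m_2 ≥ c/2, 2 m_1 + m_2 > 0 }. -/

import Mathlib

/-- The image of the moment map of the Eguchi-Hanson metric with parameter
`c > 0` in the `(α, β)` coordinate chart: with `Q = √(|β|²(1+|α|²)² + c²)`,
`F(α,β) = (((1−|α|²)/(2(1+|α|²)))Q, (|α|²/(1+|α|²))Q)`, the range of `F` is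
exactly `{(m₁, m₂) : m₂ ≥ 0, m₁ + m₂ ≥ c/2, 2m₁ + m₂ > 0}`. -/
theorem eguchi_hanson_moment_map_image
    (c : ℝ) (hc : 0 < c)
    (F : ℂ × ℂ → ℝ × ℝ)
    (hF : ∀ α β : ℂ, F (α, β) =
      (((1 - ‖α‖ ^ 2) / (2 * (1 + ‖α‖ ^ 2))) *
          Real.sqrt (‖β‖ ^ 2 * (1 + ‖α‖ ^ 2) ^ 2 + c ^ 2),
        (‖α‖ ^ 2 / (1 + ‖α‖ ^ 2)) *
          Real.sqrt (‖β‖ ^ 2 * (1 + ‖α‖ ^ 2) ^ 2 + c ^ 2))) :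
    Set.range F =
      { m : ℝ × ℝ | 0 ≤ m.2 ∧ c / 2 ≤ m.1 + m.2 ∧ 0 < 2 * m.1 + m.2 } := by
  ext m
  constructor
  · rintro ⟨⟨α, β⟩, rfl⟩
    rw [hF]
    set a := ‖α‖ with ha'
    set b := ‖β‖ with hb'
    have ha : 0 ≤ a := norm_nonneg α
    have hb : 0 ≤ b := norm_nonneg β
    have h1 : (0:ℝ) < 1 + a ^ 2 := by positivity
    set Q := Real.sqrt (b ^ 2 * (1 + a ^ 2) ^ 2 + c ^ 2) with hQ
    have hQc : c ≤ Q := by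
      rw [hQ]
      calc c = Real.sqrt (c ^ 2) := by rw [Real.sqrt_sq hc.le]
        _ ≤ _ := Real.sqrt_le_sqrt (by nlinarith)
    have hQ0 : 0 < Q := lt_of_lt_of_le hc hQc
    refine ⟨?_, ?_, ?_⟩
    · exact mul_nonneg (by positivity) hQ0.le
    · have : (1 - a ^ 2) / (2 * (1 + a ^ 2)) * Q + a ^ 2 / (1 + a ^ 2) * Q = Q / 2 := by
        field_simp; ring
      simp only [this]
      linarith
    · have : 2 * ((1 - a ^ 2) / (2 * (1 + a ^ 2)) * Q) + a ^ 2 / (1 + a ^ 2) * Q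
          = Q / (1 + a ^ 2) := by
        field_simp; ring
      simp only [this]
      positivity
  · rintro ⟨h2, h12, h21⟩
    set s := 2 * m.1 + m.2 with hs'
    set Q := 2 * (m.1 + m.2) with hQ'
    have hQc : c ≤ Q := by simp [hQ']; linarith
    have hQ0 : 0 < Q := lt_of_lt_of_le hc hQc
    set t := m.2 / s with ht'
    have ht : 0 ≤ t := div_nonneg h2 h21.le
    have h1t : 1 + t = Q / s := by
      rw [ht', hQ', hs']; field_simp [(show 2 * m.1 + m.2 ≠ 0 from ne_of_gt h21)]; ring
    have h1t0 : (0:ℝ) < 1 + t := by positivity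
    set b0 := Real.sqrt (Q ^ 2 - c ^ 2) / (1 + t) with hb0'
    have hb0 : 0 ≤ b0 := by positivity
    refine ⟨(((Real.sqrt t : ℝ) : ℂ), ((b0 : ℝ) : ℂ)), ?_⟩
    rw [hF]
    have hat : ‖((Real.sqrt t : ℝ) : ℂ)‖ ^ 2 = t := by
      rw [Complex.norm_real, Real.norm_eq_abs, sq_abs, Real.sq_sqrt ht]
    have hbt : ‖((b0 : ℝ) : ℂ)‖ ^ 2 = b0 ^ 2 := by
      rw [Complex.norm_real, Real.norm_eq_abs, sq_abs]
    rw [hat, hbt]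
    have hinner : b0 ^ 2 * (1 + t) ^ 2 + c ^ 2 = Q ^ 2 := by
      rw [hb0']
      rw [div_pow, div_mul_cancel₀ _ (by positivity : (1 + t) ^ 2 ≠ 0)]
      rw [Real.sq_sqrt (by nlinarith : 0 ≤ Q ^ 2 - c ^ 2)]
      ring
    rw [hinner, Real.sqrt_sq hQ0.le]
    have hts : t * s = m.2 := by rw [ht']; field_simp
    have hm : m = (m.1, m.2) := rfl
    rw [hm]
    refine Prod.ext ?_ ?_
    · show (1 - t) / (2 * (1 + t)) * Q = m.1
      rw [h1t]
      have hsne : s ≠ 0 := ne_of_gt h21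
      field_simp
      nlinarith [hts]
    · show t / (1 + t) * Q = m.2
      rw [h1t]
      have hsne : s ≠ 0 := ne_of_gt h21
      field_simp
      nlinarith [hts]
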